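/- Let l, m, n be positive integers with l > m ≥ n ≥ l/2, and let c₁, c₂ ∈ ℚ. Then, as an identity of rational numbers, Σ_{k=0}^{n} C(m+k,k)·C(m,k)·C(n+k,k)·C(n,k) · { [ 1 + k·( H^{(1)}_{m+k} + H^{(1)}_{m−k} + H^{(1)}_{n+k} + H^{(1)}_{n−k} − 4·H^{(1)}_k ) ] · [ c₁·( H^{(1)}_{k+n} − H^{(1)}_{k+l−n−1} ) + c₂·( H^{(1)}_{k+m} − H^{(1)}_{k+l−m−1} ) ] − k·[ c₁·( H^{(2)}_{k+n} − H^{(2)}_{k+l−n−1} ) + c₂·( H^{(2)}_{k+m} − H^{(2)}_{k+l−m−1} ) ] } + Σ_{k=n+1}^{m} (−1)^{k−n} · C(m+k,k)·C(m,k)·C(n+k,k) / C(k−1,n) · [ c₁·( H^{(1)}_{k+n} − H^{(1)}_{k+l−n−1} ) + c₂·( H^{(1)}_{k+m} − H^{(1)}_{k+l−m−1} ) ] = 0. -/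

import Mathlib

open Polynomial Finset

/-- The generalized harmonic sum `H⁽ⁱ⁾_n = ∑_{j=1}^{n} 1/jⁱ`. -/
def harmonic' (i n : ℕ) : ℚ := ∑ j ∈ Finset.Icc 1 n, 1 / (j : ℚ) ^ i

lemma harmonic'_succ (p n : ℕ) :
    harmonic' p (n + 1) = harmonic' p n + 1 / ((n : ℚ) + 1) ^ p := by
  unfold harmonic'
  rw [Finset.sum_Icc_succ_top (by omega : 1 ≤ n + 1)]
  push_cast; ring

variable {ι : Type*} [DecidableEq ι]

lemma derivative_finset_prod (s : Finset ι) (f : ι → ℚ[X]) :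
    derivative (∏ i ∈ s, f i) = ∑ i ∈ s, (∏ t ∈ s.erase i, f t) * derivative (f i) := by
  classical
  induction s using Finset.induction with
  | empty => simp
  | @insert a s ha ih =>
      rw [Finset.prod_insert ha, derivative_mul, ih, Finset.sum_insert ha,
        Finset.erase_insert ha, Finset.mul_sum]
      congr 1
      · ring
      · refine Finset.sum_congr rfl fun i hi => ?_
        rw [Finset.erase_insert_of_ne (by rintro rfl; exact ha hi),
          Finset.prod_insert (fun h => ha (Finset.mem_of_mem_erase h))]
        ring

lemma eval_derivative_prod_linear (s : Finset ι) (r : ι → ℚ) (x : ℚ) :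
    (derivative (∏ i ∈ s, (X - C (r i)))).eval x
      = ∑ i ∈ s, ∏ t ∈ s.erase i, (x - r t) := by
  rw [derivative_finset_prod]
  simp [eval_finset_sum, eval_prod]

lemma eval_derivative_prod_linear' (s : Finset ι) (r : ι → ℚ) (x : ℚ)
    (h : ∀ i ∈ s, x - r i ≠ 0) :
    (derivative (∏ i ∈ s, (X - C (r i)))).eval x
      = (∏ i ∈ s, (x - r i)) * ∑ i ∈ s, (x - r i)⁻¹ := by
  rw [eval_derivative_prod_linear, Finset.mul_sum]
  refine Finset.sum_congr rfl fun i hi => ?_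
  rw [← Finset.prod_erase_mul s _ hi, mul_assoc,
    mul_inv_cancel₀ (h i hi), mul_one]

lemma sq_dvd_eval_eq_zero {a : ℚ} {f : ℚ[X]} (h : (X - C a) ^ 2 ∣ f) :
    f.eval a = 0 := by
  obtain ⟨g, rfl⟩ := h
  simp

lemma sq_dvd_derivative_eval_eq_zero {a : ℚ} {f : ℚ[X]} (h : (X - C a) ^ 2 ∣ f) :
    f.derivative.eval a = 0 := by
  obtain ⟨g, rfl⟩ := h
  simp [derivative_mul, derivative_pow]

lemma sq_dvd_of_eval_zero_derivative_zero {a : ℚ} {f : ℚ[X]}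
    (h1 : f.eval a = 0) (h2 : f.derivative.eval a = 0) : (X - C a) ^ 2 ∣ f := by
  obtain ⟨g, rfl⟩ := (dvd_iff_isRoot (p := f)).mpr h1
  have hg : g.eval a = 0 := by
    have := h2
    simp only [derivative_mul, derivative_sub, derivative_X, derivative_C, sub_zero, one_mul,
      eval_add, eval_mul, eval_sub, eval_X, eval_C, sub_self, zero_mul, add_zero] at this
    simpa using this
  obtain ⟨g', rfl⟩ := (dvd_iff_isRoot (p := g)).mpr hg
  exact ⟨g', by ring⟩

lemma monic_prod_linear (s : Finset ι) (r : ι → ℚ) :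
    (∏ i ∈ s, (X - C (r i))).Monic :=
  monic_prod_of_monic _ _ fun i _ => monic_X_sub_C (r i)

lemma natDegree_prod_linear (s : Finset ι) (r : ι → ℚ) :
    (∏ i ∈ s, (X - C (r i))).natDegree = s.card := by
  rw [natDegree_prod_of_monic _ _ fun i _ => monic_X_sub_C (r i)]
  simp


notation "fQ" => (fun x => ((Nat.factorial x : ℕ) : ℚ))

lemma fQ_ne_zero (x : ℕ) : (Nat.factorial x : ℚ) ≠ 0 := by
  exact_mod_cast Nat.cast_ne_zero.mpr (Nat.factorial_ne_zero x)

lemma fQ_div_self (x : ℕ) : (Nat.factorial x : ℚ) / (Nat.factorial x : ℚ) = 1 :=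
  div_self (fQ_ne_zero x)

lemma prodIccAdd (k c : ℕ) :
    ∏ i ∈ Icc 1 c, ((k : ℚ) + i) = (Nat.factorial (k + c) : ℚ) / (Nat.factorial k : ℚ) := by
  induction c with
  | zero => simp [fQ_div_self]
  | succ c ih =>
      rw [Finset.prod_Icc_succ_top (by omega : 1 ≤ c + 1), ih]
      rw [show k + (c+1) = (k+c) + 1 by ring, Nat.factorial_succ]
      push_cast
      field_simp
      ring

lemma prodIccSub' (a b k : ℕ) (hk : k < a) (hab : a ≤ b + 1) :
    ∏ i ∈ Icc a b, ((i : ℚ) - k)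
      = (Nat.factorial (b - k) : ℚ) / (Nat.factorial (a - 1 - k) : ℚ) := by
  induction b with
  | zero =>
      have ha : a = 1 := by omega
      have hk0 : k = 0 := by omega
      subst ha hk0; simp
  | succ b ih =>
      rcases Nat.lt_or_ge b (a - 1) with hb | hb
      · have hab' : a = b + 2 := by omega
        subst hab'
        simp [show b + 2 - 1 - k = b + 1 - k by omega, fQ_div_self]
      · rw [Finset.prod_Icc_succ_top (by omega : a ≤ b + 1), ih (by omega)]
        have h1 : b + 1 - k = (b - k) + 1 := by omega
        rw [h1, Nat.factorial_succ]
        have h2 : ((b + 1 : ℕ) : ℚ) - (k : ℚ) = ((b - k : ℕ) : ℚ) + 1 := by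
          push_cast [Nat.cast_sub (by omega : k ≤ b)]; ring
        push_cast
        rw [show ((b:ℚ) + 1 - k) = ((b - k : ℕ) : ℚ) + 1 by exact_mod_cast h2]
        field_simp

lemma prodIccSub (a b k : ℕ) (ha : 1 ≤ a) (hab : a ≤ b + 1) (hb : b < k) :
    ∏ i ∈ Icc a b, ((k : ℚ) - i)
      = (Nat.factorial (k - a) : ℚ) / (Nat.factorial (k - b - 1) : ℚ) := by
  induction b with
  | zero =>
      have ha1 : a = 1 := by omega
      subst ha1
      simp [show k - 0 - 1 = k - 1 by omega, fQ_div_self]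
  | succ b ih =>
      rcases Nat.lt_or_ge b (a - 1) with hb' | hb'
      · have hab' : a = b + 2 := by omega
        subst hab'
        simp [show k - (b+2) = k - (b+1) - 1 by omega, fQ_div_self]
      · rw [Finset.prod_Icc_succ_top (by omega : a ≤ b + 1), ih (by omega) (by omega)]
        have e1 : (Nat.factorial (k - b - 1) : ℚ)
            = ((k:ℚ) - b - 1) * (Nat.factorial (k - (b+1) - 1) : ℚ) := by
          rw [show k - b - 1 = (k - (b+1) - 1) + 1 by omega, Nat.factorial_succ]
          have e0 : ((k - (b+1) - 1 : ℕ) : ℚ) = (k:ℚ) - b - 2 := by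
            rw [show k - (b+1) - 1 = k - (b+2) by omega, Nat.cast_sub (by omega)]
            push_cast; ring
          push_cast [e0]; ring
        rw [e1]
        have hne : ((k:ℚ) - b - 1) ≠ 0 := by
          have h := (Nat.cast_lt (α := ℚ)).mpr (show b + 1 < k by omega)
          push_cast at h; intro h0; linarith
        have h2 := fQ_ne_zero (k - (b+1) - 1)
        push_cast
        field_simp
        ring

lemma prodRangeSub (c k : ℕ) (hc : c ≤ k) :
    ∏ i ∈ range c, ((k : ℚ) - i)
      = (Nat.factorial k : ℚ) / (Nat.factorial (k - c) : ℚ) := by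
  induction c with
  | zero => simp [fQ_div_self]
  | succ c ih =>
      rw [Finset.prod_range_succ, ih (by omega)]
      have e1 : (Nat.factorial (k - c) : ℚ)
          = ((k:ℚ) - c) * (Nat.factorial (k - (c+1)) : ℚ) := by
        rw [show k - c = (k - (c+1)) + 1 by omega, Nat.factorial_succ]
        have e0 : ((k - (c+1) : ℕ) : ℚ) = (k:ℚ) - c - 1 := by
          rw [Nat.cast_sub (by omega)]; push_cast; ring
        push_cast [e0]; ring
      rw [e1]
      have hne : ((k:ℚ) - c) ≠ 0 := by
        have h := (Nat.cast_lt (α := ℚ)).mpr (show c < k by omega)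
        push_cast at h; intro h0; linarith
      have h2 := fQ_ne_zero (k - (c+1))
      field_simp

lemma prodIccSubNeg (a b k : ℕ) (hk : k < a) (hab : a ≤ b + 1) :
    ∏ i ∈ Icc a b, ((k : ℚ) - i)
      = (-1 : ℚ) ^ (b + 1 - a) * ((Nat.factorial (b - k) : ℚ) / (Nat.factorial (a - 1 - k) : ℚ)) := by
  have : ∏ i ∈ Icc a b, ((k : ℚ) - i) = ∏ i ∈ Icc a b, (-1) * ((i : ℚ) - k) := by
    refine Finset.prod_congr rfl fun i hi => by ring
  rw [this, Finset.prod_mul_distrib, Finset.prod_const, prodIccSub' a b k hk hab,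
    Nat.card_Icc]

lemma sumIccAdd (p k c : ℕ) :
    ∑ i ∈ Icc 1 c, 1 / ((k : ℚ) + i) ^ p = harmonic' p (k + c) - harmonic' p k := by
  induction c with
  | zero => simp
  | succ c ih =>
      rw [Finset.sum_Icc_succ_top (by omega : 1 ≤ c + 1), ih,
        show k + (c+1) = (k+c) + 1 by ring, harmonic'_succ]
      push_cast
      ring

lemma sumIccSub' (a b k : ℕ) (hk : k < a) (hab : a ≤ b + 1) :
    ∑ i ∈ Icc a b, 1 / ((i : ℚ) - k) = harmonic' 1 (b - k) - harmonic' 1 (a - 1 - k) := by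
  induction b with
  | zero =>
      have ha : a = 1 := by omega
      have hk0 : k = 0 := by omega
      subst ha hk0; simp
  | succ b ih =>
      rcases Nat.lt_or_ge b (a - 1) with hb | hb
      · have hab' : a = b + 2 := by omega
        subst hab'
        simp [show b + 2 - 1 - k = b + 1 - k by omega]
      · rw [Finset.sum_Icc_succ_top (by omega : a ≤ b + 1), ih (by omega),
          show b + 1 - k = (b - k) + 1 by omega, harmonic'_succ]
        have h2 : ((b + 1 : ℕ) : ℚ) - (k : ℚ) = ((b - k : ℕ) : ℚ) + 1 := by
          push_cast [Nat.cast_sub (by omega : k ≤ b)]; ring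
        push_cast at h2 ⊢
        rw [h2]
        ring

lemma sumRangeSub (c k : ℕ) (hc : c ≤ k) :
    ∑ i ∈ range c, 1 / ((k : ℚ) - i) = harmonic' 1 k - harmonic' 1 (k - c) := by
  induction c with
  | zero => simp
  | succ c ih =>
      rw [Finset.sum_range_succ, ih (by omega),
        show k - c = (k - (c+1)) + 1 by omega, harmonic'_succ]
      have h2 : (k : ℚ) - (c : ℚ) = ((k - (c+1) : ℕ) : ℚ) + 1 := by
        push_cast [Nat.cast_sub (by omega : c + 1 ≤ k)]; ring
      rw [h2]
      ring


section defs
noncomputable def pA (n : ℕ) : ℚ[X] := ∏ i ∈ Finset.range (n+1), (X - C (i:ℚ))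
noncomputable def pB (m n : ℕ) : ℚ[X] := ∏ i ∈ Finset.Icc (n+1) m, (X - C (i:ℚ))
noncomputable def pPi (n k : ℕ) : ℚ[X] := ∏ i ∈ (Finset.range (n+1)).erase k, (X - C (i:ℚ))
noncomputable def pCk (m n k : ℕ) : ℚ[X] := ∏ i ∈ (Finset.Icc (n+1) m).erase k, (X - C (i:ℚ))
noncomputable def pU (m n j : ℕ) : ℚ[X] :=
  (∏ i ∈ (Finset.Icc 1 m).erase j, (X - C (-(i:ℚ)))) * ∏ i ∈ Finset.Icc 1 n, (X - C (-(i:ℚ)))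
noncomputable def pP (m n j : ℕ) : ℚ[X] := X * pU m n j
end defs

section evals
variable {m n j k : ℕ}

lemma eval_pU (hj1 : 1 ≤ j) (hjm : j ≤ m) (k : ℕ) :
    (pU m n j).eval (k : ℚ)
      = ((Nat.factorial (k+m) : ℚ) / (Nat.factorial k * ((k:ℚ) + j)))
        * ((Nat.factorial (k+n) : ℚ) / (Nat.factorial k)) := by
  unfold pU
  rw [eval_mul, eval_prod, eval_prod]
  simp only [eval_sub, eval_X, eval_C, sub_neg_eq_add]
  have h2 : ∏ i ∈ Finset.Icc 1 n, ((k:ℚ) + i) = (Nat.factorial (k+n) : ℚ) / Nat.factorial k :=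
    prodIccAdd k n
  have h0 : ((k:ℚ) + j) ≠ 0 := by positivity
  have h1 : ∏ i ∈ (Finset.Icc 1 m).erase j, ((k:ℚ) + i)
      = (Nat.factorial (k+m) : ℚ) / (Nat.factorial k * ((k:ℚ) + j)) := by
    have hmem : j ∈ Finset.Icc 1 m := by simp; omega
    have := Finset.prod_erase_mul (Finset.Icc 1 m) (fun i => ((k:ℚ) + i)) hmem
    have hall := prodIccAdd k m
    rw [hall] at this
    field_simp at this ⊢
    linarith [this]
  rw [h1, h2]

lemma eval_pB_le (hk : k ≤ n) (hnm : n ≤ m) :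
    (pB m n).eval (k : ℚ)
      = (-1:ℚ)^(m-n) * ((Nat.factorial (m-k) : ℚ) / (Nat.factorial (n-k) : ℚ)) := by
  unfold pB
  rw [eval_prod]
  simp only [eval_sub, eval_X, eval_C]
  rw [prodIccSubNeg (n+1) m k (by omega) (by omega)]
  congr 2 <;> omega

lemma eval_pB_gt (hk1 : n < k) (hk2 : k ≤ m) : (pB m n).eval (k : ℚ) = 0 := by
  unfold pB
  rw [eval_prod]
  refine Finset.prod_eq_zero (i := k) (by simp; omega) (by simp)

lemma eval_pPi_self (hk : k ≤ n) :
    (pPi n k).eval (k : ℚ)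
      = (-1:ℚ)^(n-k) * (Nat.factorial k : ℚ) * (Nat.factorial (n-k) : ℚ) := by
  unfold pPi
  rw [eval_prod]
  simp only [eval_sub, eval_X, eval_C]
  have hsplit : (Finset.range (n+1)).erase k = Finset.range k ∪ Finset.Icc (k+1) n := by
    ext i; simp [Finset.mem_erase, Finset.mem_range, Finset.mem_Icc]; omega
  rw [hsplit, Finset.prod_union (by rw [Finset.disjoint_left]; intro i hi hi'; simp at hi hi'; omega)]
  rw [prodRangeSub k k le_rfl, prodIccSubNeg (k+1) n k (by omega) (by omega)]
  have e1 : k - k = 0 := by omega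
  have e2 : k + 1 - 1 - k = 0 := by omega
  have e3 : n + 1 - (k+1) = n - k := by omega
  rw [e1, e2, e3]
  simp [Nat.factorial_zero]
  ring

lemma eval_pA_gt (hk : n < k) :
    (pA n).eval (k : ℚ) = (Nat.factorial k : ℚ) / (Nat.factorial (k-n-1) : ℚ) := by
  unfold pA
  rw [eval_prod]
  simp only [eval_sub, eval_X, eval_C]
  rw [prodRangeSub (n+1) k (by omega)]
  have : k - (n+1) = k - n - 1 := by omega
  rw [this]

lemma eval_pA_le (hk : k ≤ n) : (pA n).eval (k : ℚ) = 0 := by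
  unfold pA
  rw [eval_prod]
  refine Finset.prod_eq_zero (i := k) (by simp; omega) (by simp)

lemma eval_pCk_self (hk1 : n < k) (hk2 : k ≤ m) :
    (pCk m n k).eval (k : ℚ)
      = (-1:ℚ)^(m-k) * (Nat.factorial (k-n-1) : ℚ) * (Nat.factorial (m-k) : ℚ) := by
  unfold pCk
  rw [eval_prod]
  simp only [eval_sub, eval_X, eval_C]
  have hsplit : (Finset.Icc (n+1) m).erase k = Finset.Icc (n+1) (k-1) ∪ Finset.Icc (k+1) m := by
    ext i; simp [Finset.mem_erase, Finset.mem_Icc]; omega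
  rw [hsplit, Finset.prod_union (by rw [Finset.disjoint_left]; intro i hi hi'; simp at hi hi'; omega)]
  rw [prodIccSub (n+1) (k-1) k (by omega) (by omega) (by omega),
    prodIccSubNeg (k+1) m k (by omega) (by omega)]
  have e1 : k - (k-1) - 1 = 0 := by omega
  have e2 : k + 1 - 1 - k = 0 := by omega
  have e3 : m + 1 - (k+1) = m - k := by omega
  rw [e1, e2, e3]
  simp only [Nat.factorial_zero, Nat.cast_one, div_one]
  rw [show k - (n+1) = k - n - 1 from by omega]
  ring
end evals
section derivs
open Polynomial Finset
variable {m n j k : ℕ}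

lemma harmonic'_zero (p : ℕ) : harmonic' p 0 = 0 := by simp [harmonic']

lemma deriv_pU (hj1 : 1 ≤ j) (hjm : j ≤ m) (k : ℕ) :
    (Polynomial.derivative (pU m n j)).eval (k : ℚ)
      = (pU m n j).eval (k:ℚ) *
        ((harmonic' 1 (k+m) - harmonic' 1 k - ((k:ℚ)+j)⁻¹)
          + (harmonic' 1 (k+n) - harmonic' 1 k)) := by
  unfold pU
  rw [derivative_mul, eval_add, eval_mul, eval_mul, eval_mul]
  have hne1 : ∀ i ∈ (Finset.Icc 1 m).erase j, (k:ℚ) - (-(i:ℚ)) ≠ 0 := by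
    intro i hi
    simp only [Finset.mem_erase, Finset.mem_Icc] at hi
    have : (1:ℚ) ≤ (i:ℚ) := by exact_mod_cast hi.2.1
    intro h; rw [sub_neg_eq_add] at h
    have hk0 : (0:ℚ) ≤ (k:ℚ) := Nat.cast_nonneg k
    linarith
  have hne2 : ∀ i ∈ Finset.Icc 1 n, (k:ℚ) - (-(i:ℚ)) ≠ 0 := by
    intro i hi
    simp only [Finset.mem_Icc] at hi
    have : (1:ℚ) ≤ (i:ℚ) := by exact_mod_cast hi.1
    intro h; rw [sub_neg_eq_add] at h
    have hk0 : (0:ℚ) ≤ (k:ℚ) := Nat.cast_nonneg k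
    linarith
  rw [eval_derivative_prod_linear' _ _ _ hne1, eval_derivative_prod_linear' _ _ _ hne2]
  have hsum2 : ∑ i ∈ Finset.Icc 1 n, ((k:ℚ) - (-(i:ℚ)))⁻¹
      = harmonic' 1 (k+n) - harmonic' 1 k := by
    rw [← sumIccAdd 1 k n]
    refine Finset.sum_congr rfl fun i hi => by rw [sub_neg_eq_add, pow_one, one_div]
  have hsum1 : ∑ i ∈ (Finset.Icc 1 m).erase j, ((k:ℚ) - (-(i:ℚ)))⁻¹
      = harmonic' 1 (k+m) - harmonic' 1 k - ((k:ℚ)+j)⁻¹ := by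
    have hmem : j ∈ Finset.Icc 1 m := by simp; omega
    have hall : ∑ i ∈ Finset.Icc 1 m, ((k:ℚ) - (-(i:ℚ)))⁻¹
        = harmonic' 1 (k+m) - harmonic' 1 k := by
      rw [← sumIccAdd 1 k m]
      refine Finset.sum_congr rfl fun i hi => by rw [sub_neg_eq_add, pow_one, one_div]
    have := Finset.sum_erase_add (Finset.Icc 1 m) (fun i => ((k:ℚ) - (-(i:ℚ)))⁻¹) hmem
    rw [hall] at this
    rw [← this]; simp only [sub_neg_eq_add]; ring
  rw [hsum1, hsum2]
  have he1 : (∏ i ∈ (Finset.Icc 1 m).erase j, ((k:ℚ) - (-(i:ℚ))))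
      = Polynomial.eval (k:ℚ) (∏ i ∈ (Finset.Icc 1 m).erase j, (X - C (-(i:ℚ)))) := by
    rw [eval_prod]; simp
  have he2 : (∏ i ∈ Finset.Icc 1 n, ((k:ℚ) - (-(i:ℚ))))
      = Polynomial.eval (k:ℚ) (∏ i ∈ Finset.Icc 1 n, (X - C (-(i:ℚ)))) := by
    rw [eval_prod]; simp
  rw [he1, he2]
  ring

lemma deriv_pP (k : ℕ) :
    (Polynomial.derivative (pP m n j)).eval (k : ℚ)
      = (pU m n j).eval (k:ℚ) + k * (Polynomial.derivative (pU m n j)).eval (k:ℚ) := by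
  unfold pP
  rw [derivative_mul, derivative_X, one_mul, eval_add, eval_mul, eval_X]

lemma deriv_E (hk : k ≤ n) (hnm : n ≤ m) :
    (Polynomial.derivative (pB m n * pPi n k ^ 2)).eval (k : ℚ)
      = (pB m n * pPi n k ^ 2).eval (k:ℚ) *
        ((harmonic' 1 (n-k) - harmonic' 1 (m-k))
          + 2 * (harmonic' 1 k - harmonic' 1 (n-k))) := by
  have hB' : (Polynomial.derivative (pB m n)).eval (k:ℚ)
      = (pB m n).eval (k:ℚ) * (harmonic' 1 (n-k) - harmonic' 1 (m-k)) := by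
    unfold pB
    have hne : ∀ i ∈ Finset.Icc (n+1) m, (k:ℚ) - (i:ℚ) ≠ 0 := by
      intro i hi h
      simp only [Finset.mem_Icc] at hi
      have : (k:ℚ) = i := by linarith
      have : k = i := by exact_mod_cast this
      omega
    rw [eval_derivative_prod_linear' _ _ _ hne]
    have hsum : ∑ i ∈ Finset.Icc (n+1) m, ((k:ℚ) - (i:ℚ))⁻¹
        = harmonic' 1 (n-k) - harmonic' 1 (m-k) := by
      have h1 : ∑ i ∈ Finset.Icc (n+1) m, ((k:ℚ) - (i:ℚ))⁻¹
          = - ∑ i ∈ Finset.Icc (n+1) m, 1 / ((i:ℚ) - (k:ℚ)) := by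
        rw [← Finset.sum_neg_distrib]
        refine Finset.sum_congr rfl fun i hi => ?_
        rw [one_div, ← inv_neg, neg_sub]
      rw [h1, sumIccSub' (n+1) m k (by omega) (by omega)]
      rw [show n + 1 - 1 - k = n - k from by omega]
      ring
    rw [hsum, eval_prod]
    simp
  have hPi' : (Polynomial.derivative (pPi n k)).eval (k:ℚ)
      = (pPi n k).eval (k:ℚ) * (harmonic' 1 k - harmonic' 1 (n-k)) := by
    unfold pPi
    have hne : ∀ i ∈ (Finset.range (n+1)).erase k, (k:ℚ) - (i:ℚ) ≠ 0 := by
      intro i hi h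
      simp only [Finset.mem_erase, Finset.mem_range] at hi
      have : (k:ℚ) = i := by linarith
      have : k = i := by exact_mod_cast this
      omega
    rw [eval_derivative_prod_linear' _ _ _ hne]
    have hsplit : (Finset.range (n+1)).erase k = Finset.range k ∪ Finset.Icc (k+1) n := by
      ext i; simp [Finset.mem_erase, Finset.mem_range, Finset.mem_Icc]; omega
    have hsum : ∑ i ∈ (Finset.range (n+1)).erase k, ((k:ℚ) - (i:ℚ))⁻¹
        = harmonic' 1 k - harmonic' 1 (n-k) := by
      rw [hsplit, Finset.sum_union (by
        rw [Finset.disjoint_left]; intro i hi hi'; simp at hi hi'; omega)]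
      have h1 : ∑ i ∈ Finset.range k, ((k:ℚ) - (i:ℚ))⁻¹ = harmonic' 1 k := by
        have := sumRangeSub k k le_rfl
        rw [show k - k = 0 from by omega, harmonic'_zero, sub_zero] at this
        rw [← this]
        refine Finset.sum_congr rfl fun i hi => by rw [one_div]
      have h2 : ∑ i ∈ Finset.Icc (k+1) n, ((k:ℚ) - (i:ℚ))⁻¹ = - harmonic' 1 (n-k) := by
        have h3 : ∑ i ∈ Finset.Icc (k+1) n, ((k:ℚ) - (i:ℚ))⁻¹
            = - ∑ i ∈ Finset.Icc (k+1) n, 1 / ((i:ℚ) - (k:ℚ)) := by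
          rw [← Finset.sum_neg_distrib]
          refine Finset.sum_congr rfl fun i hi => by rw [one_div, ← inv_neg, neg_sub]
        rw [h3, sumIccSub' (k+1) n k (by omega) (by omega),
          show k + 1 - 1 - k = 0 from by omega, harmonic'_zero]
        ring
      rw [h1, h2]; ring
    rw [hsum, eval_prod]
    simp
  rw [derivative_mul, derivative_pow]
  simp only [eval_add, eval_mul, eval_pow, eval_C, eval_ofNat, Nat.cast_ofNat, hB', hPi']
  ring
end derivs
section hermite
open Polynomial Finset

lemma hermite_unique (m n : ℕ) (hnm : n ≤ m) (f : ℚ[X])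
    (hdeg : f.natDegree < m + n + 2) (hf0 : f ≠ 0)
    (h1 : ∀ k, k ≤ n → f.eval (k:ℚ) = 0)
    (h2 : ∀ k, k ≤ n → (Polynomial.derivative f).eval (k:ℚ) = 0)
    (h3 : ∀ k, n < k → k ≤ m → f.eval (k:ℚ) = 0) : False := by
  classical
  set g : ℕ → ℚ[X] := fun k => (X - C (k:ℚ)) ^ (if k ≤ n then 2 else 1) with hg
  have hdvd : ∀ k ∈ Finset.range (m+1), g k ∣ f := by
    intro k hk
    simp only [Finset.mem_range] at hk
    by_cases hkn : k ≤ n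
    · simp only [hg, if_pos hkn]
      exact sq_dvd_of_eval_zero_derivative_zero (h1 k hkn) (h2 k hkn)
    · simp only [hg, if_neg hkn, pow_one]
      exact dvd_iff_isRoot.mpr (h3 k (by omega) (by omega))
  have hcop : (↑(Finset.range (m+1)) : Set ℕ).Pairwise (Function.onFun IsCoprime g) := by
    intro a _ b _ hab
    have base : IsCoprime (X - C (a:ℚ)) (X - C (b:ℚ)) :=
      pairwise_coprime_X_sub_C Nat.cast_injective hab
    exact base.pow
  have hd := Finset.prod_dvd_of_coprime hcop hdvd
  have hmono : ∀ k ∈ Finset.range (m+1), (g k).Monic := by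
    intro k _
    exact (monic_X_sub_C _).pow _
  have hdeg2 : (∏ k ∈ Finset.range (m+1), g k).natDegree = m + n + 2 := by
    rw [natDegree_prod_of_monic _ _ hmono]
    have : ∀ k ∈ Finset.range (m+1), (g k).natDegree = if k ≤ n then 2 else 1 := by
      intro k _
      simp only [hg]
      rw [natDegree_pow, natDegree_X_sub_C, mul_one]
    rw [Finset.sum_congr rfl this]
    rw [Finset.sum_ite]
    simp only [Finset.sum_const, smul_eq_mul, mul_one, mul_two]
    have c1 : (Finset.filter (fun k => k ≤ n) (Finset.range (m+1))).card = n + 1 := by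
      have : Finset.filter (fun k => k ≤ n) (Finset.range (m+1)) = Finset.range (n+1) := by
        ext i; simp [Finset.mem_filter, Finset.mem_range]; omega
      rw [this, Finset.card_range]
    have c2 : (Finset.filter (fun k => ¬ k ≤ n) (Finset.range (m+1))).card = m - n := by
      have : Finset.filter (fun k => ¬ k ≤ n) (Finset.range (m+1)) = Finset.Icc (n+1) m := by
        ext i; simp [Finset.mem_filter, Finset.mem_range, Finset.mem_Icc]; omega
      rw [this, Nat.card_Icc]
      omega
    rw [c1, c2]
    omega
  have := Polynomial.natDegree_le_of_dvd hd hf0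
  omega

lemma decomp (m n j : ℕ) (hnm : n ≤ m) (hj1 : 1 ≤ j) (hjm : j ≤ m)
    (aa bb cc : ℕ → ℚ)
    (hA : ∀ k, k ≤ n → (pP m n j).eval (k:ℚ) = aa k * (pB m n * pPi n k ^ 2).eval (k:ℚ))
    (hB : ∀ k, k ≤ n → (Polynomial.derivative (pP m n j)).eval (k:ℚ)
        = aa k * (Polynomial.derivative (pB m n * pPi n k ^ 2)).eval (k:ℚ)
          + bb k * (pB m n * pPi n k ^ 2).eval (k:ℚ))
    (hC : ∀ k, n < k → k ≤ m → (pP m n j).eval (k:ℚ)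
        = cc k * (pA n ^ 2 * pCk m n k).eval (k:ℚ)) :
    (∑ k ∈ Finset.range (n+1), bb k) + ∑ k ∈ Finset.Icc (n+1) m, cc k = 0 := by
  classical
  set Ek : ℕ → ℚ[X] := fun k => pB m n * pPi n k ^ 2 with hEk
  set Fk : ℕ → ℚ[X] := fun k => (X - C (k:ℚ)) * Ek k with hFk
  set Gk : ℕ → ℚ[X] := fun k => pA n ^ 2 * pCk m n k with hGk
  set Q : ℚ[X] := (∑ k ∈ Finset.range (n+1), (C (aa k) * Ek k + C (bb k) * Fk k))
      + ∑ k ∈ Finset.Icc (n+1) m, C (cc k) * Gk k with hQ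
  -- divisibility helpers
  have dPi : ∀ k k' : ℕ, k ≤ n → k ≠ k' → (X - C (k:ℚ)) ∣ pPi n k' := by
    intro k k' hk hne
    unfold pPi
    exact Finset.dvd_prod_of_mem _ (by simp [Finset.mem_erase, Finset.mem_range]; omega)
  have dE : ∀ k k' : ℕ, k ≤ n → k ≠ k' → (X - C (k:ℚ))^2 ∣ Ek k' := by
    intro k k' hk hne
    exact dvd_mul_of_dvd_right (pow_dvd_pow_of_dvd (dPi k k' hk hne) 2) _
  have dF : ∀ k k' : ℕ, k ≤ n → k ≠ k' → (X - C (k:ℚ))^2 ∣ Fk k' := by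
    intro k k' hk hne
    exact Dvd.dvd.mul_left (dE k k' hk hne) _
  have dG : ∀ k k' : ℕ, k ≤ n → (X - C (k:ℚ))^2 ∣ Gk k' := by
    intro k k' hk
    have : (X - C (k:ℚ)) ∣ pA n := by
      unfold pA
      exact Finset.dvd_prod_of_mem _ (by simp [Finset.mem_range]; omega)
    exact dvd_mul_of_dvd_left (pow_dvd_pow_of_dvd this 2) _
  -- eval of Q at k ≤ n
  have evalQ : ∀ k, k ≤ n → Q.eval (k:ℚ) = aa k * (Ek k).eval (k:ℚ) := by
    intro k hk
    rw [hQ, eval_add, eval_finset_sum, eval_finset_sum]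
    have hz2 : ∀ k' ∈ Finset.Icc (n+1) m, (C (cc k') * Gk k').eval (k:ℚ) = 0 := by
      intro k' _
      simp only [hGk, eval_mul, eval_pow, eval_pA_le hk]
      ring
    rw [Finset.sum_eq_zero hz2, add_zero]
    rw [Finset.sum_eq_single k]
    · simp only [hFk, eval_add, eval_mul, eval_C, eval_sub, eval_X, sub_self, zero_mul,
        mul_zero, add_zero]
    · intro k' hk' hne
      simp only [Finset.mem_range] at hk'
      have z1 : (Ek k').eval (k:ℚ) = 0 := sq_dvd_eval_eq_zero (dE k k' hk (Ne.symm hne))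
      have z2 : (Fk k').eval (k:ℚ) = 0 := sq_dvd_eval_eq_zero (dF k k' hk (Ne.symm hne))
      simp only [eval_add, eval_mul, eval_C, z1, z2, mul_zero, add_zero]
    · intro h
      exact absurd (by simp [Finset.mem_range]; omega : k ∈ Finset.range (n+1)) h
  -- derivative eval of Q at k ≤ n
  have evalQ' : ∀ k, k ≤ n → (Polynomial.derivative Q).eval (k:ℚ)
      = aa k * (Polynomial.derivative (Ek k)).eval (k:ℚ) + bb k * (Ek k).eval (k:ℚ) := by
    intro k hk
    rw [hQ, derivative_add, derivative_sum, derivative_sum, eval_add,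
      eval_finset_sum, eval_finset_sum]
    have hz2 : ∀ k' ∈ Finset.Icc (n+1) m,
        (Polynomial.derivative (C (cc k') * Gk k')).eval (k:ℚ) = 0 := by
      intro k' _
      have z := sq_dvd_derivative_eval_eq_zero (dG k k' hk)
      simp only [derivative_C_mul, eval_mul, z, mul_zero]
    rw [Finset.sum_eq_zero hz2, add_zero]
    rw [Finset.sum_eq_single k]
    · simp only [hFk, derivative_add, derivative_C_mul, derivative_mul, derivative_sub,
        derivative_X, derivative_C, sub_zero, one_mul, eval_add, eval_mul, eval_sub, eval_X,
        eval_C, sub_self, zero_mul, add_zero, eval_zero]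
      ring
    · intro k' hk' hne
      have z1 := sq_dvd_derivative_eval_eq_zero (dE k k' hk (Ne.symm hne))
      have z2 := sq_dvd_derivative_eval_eq_zero (dF k k' hk (Ne.symm hne))
      simp only [derivative_add, derivative_C_mul, eval_add, eval_mul, eval_C, z1, z2,
        mul_zero, add_zero]
    · intro h
      exact absurd (by simp [Finset.mem_range]; omega : k ∈ Finset.range (n+1)) h
  -- eval of Q at n < k ≤ m
  have evalQ2 : ∀ k, n < k → k ≤ m → Q.eval (k:ℚ) = cc k * (Gk k).eval (k:ℚ) := by
    intro k hk1 hk2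
    rw [hQ, eval_add, eval_finset_sum, eval_finset_sum]
    have hz1 : ∀ k' ∈ Finset.range (n+1), (C (aa k') * Ek k' + C (bb k') * Fk k').eval (k:ℚ) = 0 := by
      intro k' _
      simp only [hFk, hEk, eval_add, eval_mul, eval_C, eval_pow, eval_pB_gt hk1 hk2]
      ring
    rw [Finset.sum_eq_zero hz1, zero_add]
    rw [Finset.sum_eq_single k]
    · simp only [eval_mul, eval_C]
    · intro k' hk' hne
      simp only [Finset.mem_Icc] at hk'
      have : (pCk m n k').eval (k:ℚ) = 0 := by
        unfold pCk
        rw [eval_prod]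
        refine Finset.prod_eq_zero (i := k) ?_ (by simp)
        simp [Finset.mem_erase, Finset.mem_Icc]
        omega
      simp only [hGk, eval_mul, eval_C, eval_pow, this, mul_zero]
    · intro h
      exact absurd (by simp [Finset.mem_Icc]; omega : k ∈ Finset.Icc (n+1) m) h
  -- degrees
  have degB : (pB m n).natDegree = m - n := by
    unfold pB; rw [natDegree_prod_linear, Nat.card_Icc]; omega
  have degPi : ∀ k, k ≤ n → (pPi n k).natDegree = n := by
    intro k hk
    unfold pPi
    rw [natDegree_prod_linear, Finset.card_erase_of_mem (by simp [Finset.mem_range]; omega),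
      Finset.card_range]
    omega
  have monB : (pB m n).Monic := monic_prod_linear _ _
  have monPi : ∀ k, (pPi n k).Monic := fun k => monic_prod_linear _ _
  have monA : (pA n).Monic := monic_prod_linear _ _
  have degA : (pA n).natDegree = n + 1 := by
    unfold pA; rw [natDegree_prod_linear, Finset.card_range]
  have monE : ∀ k, (Ek k).Monic := fun k => monB.mul ((monPi k).pow 2)
  have degE : ∀ k, k ≤ n → (Ek k).natDegree = m + n := by
    intro k hk
    rw [hEk]
    rw [monB.natDegree_mul ((monPi k).pow 2), (monPi k).natDegree_pow, degB, degPi k hk]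
    omega
  have monF : ∀ k, (Fk k).Monic := fun k => (monic_X_sub_C _).mul (monE k)
  have degF : ∀ k, k ≤ n → (Fk k).natDegree = m + n + 1 := by
    intro k hk
    rw [hFk, (monic_X_sub_C _).natDegree_mul (monE k), natDegree_X_sub_C, degE k hk]
    omega
  have monCk : ∀ k, (pCk m n k).Monic := fun k => monic_prod_linear _ _
  have degCk : ∀ k, n < k → k ≤ m → (pCk m n k).natDegree = m - n - 1 := by
    intro k hk1 hk2
    unfold pCk
    rw [natDegree_prod_linear, Finset.card_erase_of_mem (by simp [Finset.mem_Icc]; omega),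
      Nat.card_Icc]
    omega
  have monG : ∀ k, (Gk k).Monic := fun k => (monA.pow 2).mul (monCk k)
  have degG : ∀ k, n < k → k ≤ m → (Gk k).natDegree = m + n + 1 := by
    intro k hk1 hk2
    rw [hGk, (monA.pow 2).natDegree_mul (monCk k), monA.natDegree_pow, degA, degCk k hk1 hk2]
    omega
  have degP : (pP m n j).natDegree ≤ m + n := by
    unfold pP pU
    refine le_trans (natDegree_mul_le) ?_
    have h1 : (X : ℚ[X]).natDegree = 1 := natDegree_X
    have h2 : ((∏ i ∈ (Finset.Icc 1 m).erase j, (X - C (-(i:ℚ)))) *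
        ∏ i ∈ Finset.Icc 1 n, (X - C (-(i:ℚ)))).natDegree ≤ m - 1 + n := by
      refine le_trans (natDegree_mul_le) ?_
      rw [natDegree_prod_linear, natDegree_prod_linear,
        Finset.card_erase_of_mem (by simp [Finset.mem_Icc]; omega), Nat.card_Icc, Nat.card_Icc]
      omega
    omega
  have degQ : Q.natDegree ≤ m + n + 1 := by
    rw [hQ]
    refine le_trans (natDegree_add_le _ _) ?_
    have q1 : (∑ k ∈ Finset.range (n+1), (C (aa k) * Ek k + C (bb k) * Fk k)).natDegree
        ≤ m + n + 1 := by
      refine natDegree_sum_le_of_forall_le _ _ fun k hk => ?_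
      simp only [Finset.mem_range] at hk
      refine le_trans (natDegree_add_le _ _) ?_
      have e1 : (C (aa k) * Ek k).natDegree ≤ m + n + 1 := by
        refine le_trans (natDegree_C_mul_le _ _) ?_
        rw [degE k (by omega)]; omega
      have e2 : (C (bb k) * Fk k).natDegree ≤ m + n + 1 := by
        refine le_trans (natDegree_C_mul_le _ _) ?_
        rw [degF k (by omega)]
      omega
    have q2 : (∑ k ∈ Finset.Icc (n+1) m, C (cc k) * Gk k).natDegree ≤ m + n + 1 := by
      refine natDegree_sum_le_of_forall_le _ _ fun k hk => ?_
      simp only [Finset.mem_Icc] at hk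
      refine le_trans (natDegree_C_mul_le _ _) ?_
      rw [degG k (by omega) (by omega)]
    omega
  -- conclude pP = Q
  have hPQ : pP m n j = Q := by
    by_contra hne
    have hf0 : pP m n j - Q ≠ 0 := sub_ne_zero_of_ne hne
    refine hermite_unique m n hnm (pP m n j - Q) ?_ hf0 ?_ ?_ ?_
    · have := natDegree_sub_le (pP m n j) Q
      omega
    · intro k hk
      rw [eval_sub, hA k hk, evalQ k hk]
      ring
    · intro k hk
      rw [derivative_sub, eval_sub, hB k hk, evalQ' k hk]
      ring
    · intro k hk1 hk2
      rw [eval_sub, hC k hk1 hk2, evalQ2 k hk1 hk2]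
      ring
  -- extract coefficient m+n+1
  have hco : (pP m n j).coeff (m+n+1) = Q.coeff (m+n+1) := by rw [hPQ]
  rw [coeff_eq_zero_of_natDegree_lt (by omega : (pP m n j).natDegree < m+n+1)] at hco
  rw [hQ, coeff_add, finset_sum_coeff, finset_sum_coeff] at hco
  have t1 : ∀ k ∈ Finset.range (n+1),
      (C (aa k) * Ek k + C (bb k) * Fk k).coeff (m+n+1) = bb k := by
    intro k hk
    simp only [Finset.mem_range] at hk
    rw [coeff_add, coeff_C_mul, coeff_C_mul,
      coeff_eq_zero_of_natDegree_lt (by rw [degE k (by omega)]; omega : (Ek k).natDegree < m+n+1)]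
    have : (Fk k).coeff (m+n+1) = 1 := by
      have h := (monF k).coeff_natDegree
      rwa [degF k (by omega)] at h
    rw [this]
    ring
  have t2 : ∀ k ∈ Finset.Icc (n+1) m, (C (cc k) * Gk k).coeff (m+n+1) = cc k := by
    intro k hk
    simp only [Finset.mem_Icc] at hk
    rw [coeff_C_mul]
    have : (Gk k).coeff (m+n+1) = 1 := by
      have h := (monG k).coeff_natDegree
      rwa [degG k (by omega) (by omega)] at h
    rw [this, mul_one]
  rw [Finset.sum_congr rfl t1, Finset.sum_congr rfl t2] at hco
  linarith [hco]
end hermite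
section inst
open Polynomial Finset

lemma neg_one_pow_sub (a b : ℕ) (h : b ≤ a) :
    (-1:ℚ)^(a-b) = (-1)^a * (-1)^b := by
  have h1 : (-1:ℚ)^(a-b) * (-1)^b = (-1)^a := by
    rw [← pow_add]; congr 1; omega
  have h2 : (-1:ℚ)^b * (-1)^b = 1 := by
    rw [← pow_add]; exact Even.neg_one_pow ⟨b, rfl⟩
  calc (-1:ℚ)^(a-b) = (-1:ℚ)^(a-b) * ((-1)^b * (-1)^b) := by rw [h2, mul_one]
    _ = ((-1:ℚ)^(a-b) * (-1)^b) * (-1)^b := by ring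
    _ = (-1)^a * (-1)^b := by rw [h1]

noncomputable def Wq (m n k : ℕ) : ℚ :=
  (Nat.factorial (m+k) : ℚ) * (Nat.factorial (n+k) : ℚ) /
    ((Nat.factorial k : ℚ)^4 * (Nat.factorial (m-k) : ℚ) * (Nat.factorial (n-k) : ℚ))

noncomputable def Dq (m n k : ℕ) : ℚ :=
  harmonic' 1 (m+k) + harmonic' 1 (m-k) + harmonic' 1 (n+k) + harmonic' 1 (n-k)
    - 4 * harmonic' 1 k

noncomputable def Vq (m n k : ℕ) : ℚ :=
  (Nat.factorial (m+k) : ℚ) * (Nat.factorial (n+k) : ℚ) * (Nat.factorial (k-n-1) : ℚ) * k /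
    ((Nat.factorial k : ℚ)^4 * (Nat.factorial (m-k) : ℚ))

noncomputable def aaF (m n j k : ℕ) : ℚ := (-1)^(m-n) * k * Wq m n k / ((k:ℚ)+j)

noncomputable def bbF (m n j k : ℕ) : ℚ :=
  (-1)^(m-n) * Wq m n k * ((1 + k * Dq m n k)/((k:ℚ)+j) - k/((k:ℚ)+j)^2)

noncomputable def ccF (m n j k : ℕ) : ℚ := (-1)^(m-n) * (-1)^(k-n) * Vq m n k / ((k:ℚ)+j)

variable {m n j : ℕ}

lemma hT_pos (hj1 : 1 ≤ j) (k : ℕ) : ((k:ℚ) + j) ≠ 0 := by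
  have h1 : (1:ℚ) ≤ (j:ℚ) := by exact_mod_cast hj1
  have h2 : (0:ℚ) ≤ (k:ℚ) := Nat.cast_nonneg k
  intro h; linarith

lemma hA_inst (hnm : n ≤ m) (hj1 : 1 ≤ j) (hjm : j ≤ m) :
    ∀ k, k ≤ n → (pP m n j).eval (k:ℚ)
      = aaF m n j k * (pB m n * pPi n k ^ 2).eval (k:ℚ) := by
  intro k hk
  have hT := hT_pos hj1 k
  rw [pP, eval_mul, eval_X, eval_pU hj1 hjm, eval_mul, eval_pow, eval_pB_le hk hnm,
    eval_pPi_self hk]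
  rw [show k+m = m+k from Nat.add_comm k m, show k+n = n+k from Nat.add_comm k n]
  unfold aaF Wq
  rw [neg_one_pow_sub m n hnm, neg_one_pow_sub n k hk]
  have f1 := fQ_ne_zero k
  have f2 := fQ_ne_zero (m-k)
  have f3 := fQ_ne_zero (n-k)
  have f4 := fQ_ne_zero (m+k)
  have f5 := fQ_ne_zero (n+k)
  rcases Nat.even_or_odd m with hm | hm <;> rcases Nat.even_or_odd n with hn | hn <;>
    rcases Nat.even_or_odd k with hkp | hkp <;>
      rw [hm.neg_one_pow, hn.neg_one_pow, hkp.neg_one_pow] <;>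
        (field_simp)

lemma hC_inst (hnm : n ≤ m) (hj1 : 1 ≤ j) (hjm : j ≤ m) :
    ∀ k, n < k → k ≤ m → (pP m n j).eval (k:ℚ)
      = ccF m n j k * (pA n ^ 2 * pCk m n k).eval (k:ℚ) := by
  intro k hk1 hk2
  have hT := hT_pos hj1 k
  rw [pP, eval_mul, eval_X, eval_pU hj1 hjm, eval_mul, eval_pow, eval_pA_gt hk1,
    eval_pCk_self hk1 hk2]
  rw [show k+m = m+k from Nat.add_comm k m, show k+n = n+k from Nat.add_comm k n]
  unfold ccF Vq
  rw [neg_one_pow_sub m n hnm, neg_one_pow_sub k n (by omega), neg_one_pow_sub m k hk2]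
  have f1 := fQ_ne_zero k
  have f2 := fQ_ne_zero (m-k)
  have f3 := fQ_ne_zero (k-n-1)
  have f4 := fQ_ne_zero (m+k)
  have f5 := fQ_ne_zero (n+k)
  rcases Nat.even_or_odd m with hm | hm <;> rcases Nat.even_or_odd n with hn | hn <;>
    rcases Nat.even_or_odd k with hkp | hkp <;>
      rw [hm.neg_one_pow, hn.neg_one_pow, hkp.neg_one_pow] <;>
        (field_simp)

set_option maxHeartbeats 3200000 in
lemma hB_inst (hnm : n ≤ m) (hj1 : 1 ≤ j) (hjm : j ≤ m) :
    ∀ k, k ≤ n → (Polynomial.derivative (pP m n j)).eval (k:ℚ)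
      = aaF m n j k * (Polynomial.derivative (pB m n * pPi n k ^ 2)).eval (k:ℚ)
        + bbF m n j k * (pB m n * pPi n k ^ 2).eval (k:ℚ) := by
  intro k hk
  have hT := hT_pos hj1 k
  rw [deriv_pP, deriv_pU hj1 hjm, deriv_E hk hnm, eval_pU hj1 hjm,
    eval_mul, eval_pow, eval_pB_le hk hnm, eval_pPi_self hk]
  rw [show k+m = m+k from Nat.add_comm k m, show k+n = n+k from Nat.add_comm k n]
  unfold aaF bbF Wq Dq
  rw [neg_one_pow_sub m n hnm, neg_one_pow_sub n k hk]
  have f1 := fQ_ne_zero k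
  have f2 := fQ_ne_zero (m-k)
  have f3 := fQ_ne_zero (n-k)
  have f4 := fQ_ne_zero (m+k)
  have f5 := fQ_ne_zero (n+k)
  set T := ((k:ℚ) + j) with hTdef
  set FM := (Nat.factorial (m+k) : ℚ) with hFM
  set FN := (Nat.factorial (n+k) : ℚ) with hFN
  set FK := (Nat.factorial k : ℚ) with hFK
  set FA := (Nat.factorial (m-k) : ℚ) with hFA
  set FB := (Nat.factorial (n-k) : ℚ) with hFB
  set q1 := harmonic' 1 (m+k) with hq1
  set q2 := harmonic' 1 k with hq2
  set q3 := harmonic' 1 (n+k) with hq3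
  set q4 := harmonic' 1 (m-k) with hq4
  set q5 := harmonic' 1 (n-k) with hq5
  clear_value T FM FN FK FA FB q1 q2 q3 q4 q5
  rcases Nat.even_or_odd m with hm | hm <;> rcases Nat.even_or_odd n with hn | hn <;>
    rcases Nat.even_or_odd k with hkp | hkp <;>
      rw [hm.neg_one_pow, hn.neg_one_pow, hkp.neg_one_pow] <;>
        (field_simp; ring)

lemma key_sum (hnm : n ≤ m) (hj1 : 1 ≤ j) (hjm : j ≤ m) :
    (∑ k ∈ Finset.range (n+1), bbF m n j k) + ∑ k ∈ Finset.Icc (n+1) m, ccF m n j k = 0 :=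
  decomp m n j hnm hj1 hjm (aaF m n j) (bbF m n j) (ccF m n j)
    (hA_inst hnm hj1 hjm) (hB_inst hnm hj1 hjm) (hC_inst hnm hj1 hjm)

end inst
section final
open Polynomial Finset

lemma neg_one_sq' (a : ℕ) : ((-1:ℚ)^a) * ((-1:ℚ)^a) = 1 := by
  rw [← pow_add]; exact Even.neg_one_pow ⟨a, rfl⟩

lemma chooseW {m n k : ℕ} (hk : k ≤ n) (hnm : n ≤ m) :
    ((m + k).choose k : ℚ) * (m.choose k : ℚ) * ((n + k).choose k : ℚ) * (n.choose k : ℚ)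
      = Wq m n k := by
  rw [Nat.cast_choose ℚ (by omega : k ≤ m + k), Nat.cast_choose ℚ (by omega : k ≤ m),
    Nat.cast_choose ℚ (by omega : k ≤ n + k), Nat.cast_choose ℚ (by omega : k ≤ n)]
  rw [show m + k - k = m from by omega, show n + k - k = n from by omega]
  unfold Wq
  have f1 := fQ_ne_zero k
  have f2 := fQ_ne_zero (m-k)
  have f3 := fQ_ne_zero (n-k)
  have f4 := fQ_ne_zero m
  have f5 := fQ_ne_zero n
  field_simp

lemma chooseV {m n k : ℕ} (hk1 : n < k) (hk2 : k ≤ m) :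
    ((m + k).choose k : ℚ) * (m.choose k : ℚ) * ((n + k).choose k : ℚ)
        / ((k - 1).choose n : ℚ)
      = Vq m n k := by
  rw [Nat.cast_choose ℚ (by omega : k ≤ m + k), Nat.cast_choose ℚ (by omega : k ≤ m),
    Nat.cast_choose ℚ (by omega : k ≤ n + k), Nat.cast_choose ℚ (by omega : n ≤ k - 1)]
  rw [show m + k - k = m from by omega, show n + k - k = n from by omega,
    show k - 1 - n = k - n - 1 from by omega]
  unfold Vq
  have hfk : (Nat.factorial k : ℚ) = k * (Nat.factorial (k-1) : ℚ) := by
    rw [show k = (k-1)+1 from by omega, Nat.factorial_succ]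
    push_cast [show k - 1 + 1 = k from by omega]
    ring
  have f1 := fQ_ne_zero k
  have f2 := fQ_ne_zero (m-k)
  have f3 := fQ_ne_zero (k-n-1)
  have f4 := fQ_ne_zero m
  have f5 := fQ_ne_zero n
  have f6 := fQ_ne_zero (k-1)
  have hk0 : (k:ℚ) ≠ 0 := by
    have : (0:ℚ) < k := by exact_mod_cast Nat.pos_of_ne_zero (by omega)
    linarith
  rw [hfk]
  field_simp

lemma Sj (m n jj : ℕ) (hnm : n ≤ m) (hj1 : 1 ≤ jj) (hjm : jj ≤ m) :
    (∑ k ∈ Finset.range (n + 1),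
        (((m + k).choose k : ℚ) * (m.choose k : ℚ) * ((n + k).choose k : ℚ) *
            (n.choose k : ℚ)) *
          ((1 + (k : ℚ) * (harmonic' 1 (m + k) + harmonic' 1 (m - k) + harmonic' 1 (n + k)
                + harmonic' 1 (n - k) - 4 * harmonic' 1 k)) * (1/((k:ℚ) + jj))
            - (k : ℚ) * (1/((k:ℚ) + jj)^2)))
      + ∑ k ∈ Finset.Icc (n + 1) m,
          (-1 : ℚ) ^ (k - n) *
            (((m + k).choose k : ℚ) * (m.choose k : ℚ) * ((n + k).choose k : ℚ)) /
              (((k - 1).choose n : ℚ)) * (1/((k:ℚ) + jj))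
      = 0 := by
  have key := key_sum (m := m) (n := n) (j := jj) hnm hj1 hjm
  have h1 : ∀ k ∈ Finset.range (n+1),
      (((m + k).choose k : ℚ) * (m.choose k : ℚ) * ((n + k).choose k : ℚ) *
          (n.choose k : ℚ)) *
        ((1 + (k : ℚ) * (harmonic' 1 (m + k) + harmonic' 1 (m - k) + harmonic' 1 (n + k)
              + harmonic' 1 (n - k) - 4 * harmonic' 1 k)) * (1/((k:ℚ) + jj))
          - (k : ℚ) * (1/((k:ℚ) + jj)^2))
      = (-1:ℚ)^(m-n) * bbF m n jj k := by
    intro k hk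
    simp only [Finset.mem_range] at hk
    rw [chooseW (by omega) hnm]
    unfold bbF Dq
    rw [show ((-1:ℚ)^(m-n)) * ((-1:ℚ)^(m-n) * Wq m n k *
        ((1 + (k:ℚ) * (harmonic' 1 (m+k) + harmonic' 1 (m-k) + harmonic' 1 (n+k)
          + harmonic' 1 (n-k) - 4 * harmonic' 1 k))/((k:ℚ)+jj) - (k:ℚ)/((k:ℚ)+jj)^2))
      = (((-1:ℚ)^(m-n)) * ((-1:ℚ)^(m-n))) * (Wq m n k *
        ((1 + (k:ℚ) * (harmonic' 1 (m+k) + harmonic' 1 (m-k) + harmonic' 1 (n+k)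
          + harmonic' 1 (n-k) - 4 * harmonic' 1 k))/((k:ℚ)+jj) - (k:ℚ)/((k:ℚ)+jj)^2))
      from by ring, neg_one_sq' (m-n), one_mul]
    ring
  have h2 : ∀ k ∈ Finset.Icc (n+1) m,
      (-1 : ℚ) ^ (k - n) *
          (((m + k).choose k : ℚ) * (m.choose k : ℚ) * ((n + k).choose k : ℚ)) /
            (((k - 1).choose n : ℚ)) * (1/((k:ℚ) + jj))
      = (-1:ℚ)^(m-n) * ccF m n jj k := by
    intro k hk
    simp only [Finset.mem_Icc] at hk
    unfold ccF
    rw [show ((-1:ℚ)^(m-n)) * ((-1:ℚ)^(m-n) * (-1:ℚ)^(k-n) * Vq m n k / ((k:ℚ)+jj))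
      = (((-1:ℚ)^(m-n)) * ((-1:ℚ)^(m-n))) * ((-1:ℚ)^(k-n) * Vq m n k / ((k:ℚ)+jj))
      from by ring, neg_one_sq' (m-n), one_mul]
    rw [← chooseV (by omega : n < k) (by omega : k ≤ m)]
    ring
  rw [Finset.sum_congr rfl h1, Finset.sum_congr rfl h2, ← Finset.mul_sum, ← Finset.mul_sum,
    ← mul_add, key, mul_zero]

lemma harmDiff (p k c d : ℕ) (hdc : d ≤ c) :
    harmonic' p (k + c) - harmonic' p (k + d)
      = ∑ i ∈ Finset.Icc (d+1) c, 1/((k:ℚ) + i)^p := by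
  rw [← sub_add_cancel (harmonic' p (k+c)) (harmonic' p k),
    ← sub_add_cancel (harmonic' p (k+d)) (harmonic' p k),
    ← sumIccAdd p k c, ← sumIccAdd p k d]
  have hsplit : Finset.Icc 1 c = Finset.Icc 1 d ∪ Finset.Icc (d+1) c := by
    ext i; simp [Finset.mem_Icc, Finset.mem_union]; omega
  rw [hsplit, Finset.sum_union (by
    rw [Finset.disjoint_left]; intro i hi hi'; simp at hi hi'; omega)]
  ring
end final
section main
open Polynomial Finset

/-- The rising factorial `(a)ₖ = a(a+1)⋯(a+k-1)` in `ℚ`. -/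
def risingFacQ (a : ℚ) (k : ℕ) : ℚ := ∏ t ∈ Finset.range k, (a + t)

/-- Theorem 3.13 (binomial coefficient–harmonic sum identity): for positive integers
`l > m ≥ n ≥ l/2` and rational constants `c₁, c₂`, a certain combination of binomial
coefficients and generalized harmonic sums vanishes. -/
theorem stmt7 (l m n : ℕ) (hl : 0 < n) (hml : m < l) (hnm : n ≤ m) (hln : l ≤ 2 * n)
    (c₁ c₂ : ℚ) :
    ∑ k ∈ Finset.range (n + 1),
        (((m + k).choose k : ℚ) * (m.choose k : ℚ) * ((n + k).choose k : ℚ) *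
            (n.choose k : ℚ)) *
          ((1 + (k : ℚ) * (harmonic' 1 (m + k) + harmonic' 1 (m - k) + harmonic' 1 (n + k)
                + harmonic' 1 (n - k) - 4 * harmonic' 1 k)) *
              (c₁ * (harmonic' 1 (k + n) - harmonic' 1 (k + l - n - 1))
                + c₂ * (harmonic' 1 (k + m) - harmonic' 1 (k + l - m - 1)))
            - (k : ℚ) *
              (c₁ * (harmonic' 2 (k + n) - harmonic' 2 (k + l - n - 1))
                + c₂ * (harmonic' 2 (k + m) - harmonic' 2 (k + l - m - 1))))
      + ∑ k ∈ Finset.Icc (n + 1) m,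
          (-1 : ℚ) ^ (k - n) *
            (((m + k).choose k : ℚ) * (m.choose k : ℚ) * ((n + k).choose k : ℚ)) /
              (((k - 1).choose n : ℚ)) *
            (c₁ * (harmonic' 1 (k + n) - harmonic' 1 (k + l - n - 1))
              + c₂ * (harmonic' 1 (k + m) - harmonic' 1 (k + l - m - 1)))
      = 0 := by
  set f1 : ℕ → ℕ → ℚ := fun i k =>
    (((m + k).choose k : ℚ) * (m.choose k : ℚ) * ((n + k).choose k : ℚ) *
        (n.choose k : ℚ)) *
      ((1 + (k : ℚ) * (harmonic' 1 (m + k) + harmonic' 1 (m - k) + harmonic' 1 (n + k)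
            + harmonic' 1 (n - k) - 4 * harmonic' 1 k)) * (1/((k:ℚ) + i))
        - (k : ℚ) * (1/((k:ℚ) + i)^2)) with hf1
  set f2 : ℕ → ℕ → ℚ := fun i k =>
    (-1 : ℚ) ^ (k - n) *
      (((m + k).choose k : ℚ) * (m.choose k : ℚ) * ((n + k).choose k : ℚ)) /
        (((k - 1).choose n : ℚ)) * (1/((k:ℚ) + i)) with hf2
  have e1 : ∀ p k : ℕ, harmonic' p (k + n) - harmonic' p (k + l - n - 1)
      = ∑ i ∈ Finset.Icc (l-n) n, 1/((k:ℚ) + i)^p := by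
    intro p k
    rw [show k + l - n - 1 = k + (l - n - 1) from by omega,
      harmDiff p k n (l-n-1) (by omega), show l - n - 1 + 1 = l - n from by omega]
  have e2 : ∀ p k : ℕ, harmonic' p (k + m) - harmonic' p (k + l - m - 1)
      = ∑ i ∈ Finset.Icc (l-m) m, 1/((k:ℚ) + i)^p := by
    intro p k
    rw [show k + l - m - 1 = k + (l - m - 1) from by omega,
      harmDiff p k m (l-m-1) (by omega), show l - m - 1 + 1 = l - m from by omega]
  have e1' : ∀ k : ℕ, harmonic' 1 (k + n) - harmonic' 1 (k + l - n - 1)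
      = ∑ i ∈ Finset.Icc (l-n) n, 1/((k:ℚ) + i) := by
    intro k; rw [e1 1 k]; exact Finset.sum_congr rfl fun i _ => by rw [pow_one]
  have e2' : ∀ k : ℕ, harmonic' 1 (k + m) - harmonic' 1 (k + l - m - 1)
      = ∑ i ∈ Finset.Icc (l-m) m, 1/((k:ℚ) + i) := by
    intro k; rw [e2 1 k]; exact Finset.sum_congr rfl fun i _ => by rw [pow_one]
  have step1 : ∀ k ∈ Finset.range (n+1),
      (((m + k).choose k : ℚ) * (m.choose k : ℚ) * ((n + k).choose k : ℚ) *
          (n.choose k : ℚ)) *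
        ((1 + (k : ℚ) * (harmonic' 1 (m + k) + harmonic' 1 (m - k) + harmonic' 1 (n + k)
              + harmonic' 1 (n - k) - 4 * harmonic' 1 k)) *
            (c₁ * (harmonic' 1 (k + n) - harmonic' 1 (k + l - n - 1))
              + c₂ * (harmonic' 1 (k + m) - harmonic' 1 (k + l - m - 1)))
          - (k : ℚ) *
            (c₁ * (harmonic' 2 (k + n) - harmonic' 2 (k + l - n - 1))
              + c₂ * (harmonic' 2 (k + m) - harmonic' 2 (k + l - m - 1))))
      = c₁ * ∑ i ∈ Finset.Icc (l-n) n, f1 i k + c₂ * ∑ i ∈ Finset.Icc (l-m) m, f1 i k := by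
    intro k _
    rw [e1' k, e2' k, e1 2 k, e2 2 k, hf1]
    simp only [Finset.sum_sub_distrib, ← Finset.mul_sum]
    ring
  have step2 : ∀ k ∈ Finset.Icc (n+1) m,
      (-1 : ℚ) ^ (k - n) *
          (((m + k).choose k : ℚ) * (m.choose k : ℚ) * ((n + k).choose k : ℚ)) /
            (((k - 1).choose n : ℚ)) *
          (c₁ * (harmonic' 1 (k + n) - harmonic' 1 (k + l - n - 1))
            + c₂ * (harmonic' 1 (k + m) - harmonic' 1 (k + l - m - 1)))
      = c₁ * ∑ i ∈ Finset.Icc (l-n) n, f2 i k + c₂ * ∑ i ∈ Finset.Icc (l-m) m, f2 i k := by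
    intro k _
    rw [e1' k, e2' k, hf2]
    simp only [← Finset.mul_sum]
    ring
  rw [Finset.sum_congr rfl step1, Finset.sum_congr rfl step2,
    Finset.sum_add_distrib, Finset.sum_add_distrib,
    ← Finset.mul_sum, ← Finset.mul_sum, ← Finset.mul_sum, ← Finset.mul_sum,
    Finset.sum_comm (s := Finset.range (n+1)) (t := Finset.Icc (l-n) n),
    Finset.sum_comm (s := Finset.range (n+1)) (t := Finset.Icc (l-m) m),
    Finset.sum_comm (s := Finset.Icc (n+1) m) (t := Finset.Icc (l-n) n),
    Finset.sum_comm (s := Finset.Icc (n+1) m) (t := Finset.Icc (l-m) m)]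
  have hJ1 : (∑ i ∈ Finset.Icc (l-n) n, ∑ k ∈ Finset.range (n+1), f1 i k)
      + ∑ i ∈ Finset.Icc (l-n) n, ∑ k ∈ Finset.Icc (n+1) m, f2 i k = 0 := by
    rw [← Finset.sum_add_distrib]
    refine Finset.sum_eq_zero fun i hi => ?_
    simp only [Finset.mem_Icc] at hi
    exact Sj m n i hnm (by omega) (by omega)
  have hJ2 : (∑ i ∈ Finset.Icc (l-m) m, ∑ k ∈ Finset.range (n+1), f1 i k)
      + ∑ i ∈ Finset.Icc (l-m) m, ∑ k ∈ Finset.Icc (n+1) m, f2 i k = 0 := by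
    rw [← Finset.sum_add_distrib]
    refine Finset.sum_eq_zero fun i hi => ?_
    simp only [Finset.mem_Icc] at hi
    exact Sj m n i hnm (by omega) (by omega)
  linear_combination c₁ * hJ1 + c₂ * hJ2
end main
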